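/- Let g̃ : M×M×[0,∞) → [0,∞] (M = real 3×3 matrices) be convex and satisfy g̃(RA,RH,δ) = g̃(A,H,δ) for all R ∈ SO(3), A,H ∈ M, δ ≥ 0. Then g̃(0,0,0) ≤ g̃(A,H,0) for all A,H ∈ M; in particular, if g̃(0,0,0) = +∞ then g̃(A,H,0) = +∞ for all A,H. -/
import Mathlib


open scoped ENNReal

theorem invariant_convex_min_at_zero
    (g : Matrix (Fin 3) (Fin 3) ℝ × Matrix (Fin 3) (Fin 3) ℝ × ℝ → ℝ≥0∞)
    (hconv : ∀ p q : Matrix (Fin 3) (Fin 3) ℝ × Matrix (Fin 3) (Fin 3) ℝ × ℝ,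
      0 ≤ p.2.2 → 0 ≤ q.2.2 → ∀ a b : ℝ, 0 ≤ a → 0 ≤ b → a + b = 1 →
        g (a • p + b • q) ≤ ENNReal.ofReal a * g p + ENNReal.ofReal b * g q)
    (hinv : ∀ R : Matrix (Fin 3) (Fin 3) ℝ, R * Matrix.transpose R = 1 → R.det = 1 →
      ∀ A H : Matrix (Fin 3) (Fin 3) ℝ, ∀ δ : ℝ, 0 ≤ δ → g (R * A, R * H, δ) = g (A, H, δ)) :
    (∀ A H : Matrix (Fin 3) (Fin 3) ℝ, g (0, 0, 0) ≤ g (A, H, 0))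
    ∧ (g (0, 0, 0) = ⊤ → ∀ A H : Matrix (Fin 3) (Fin 3) ℝ, g (A, H, 0) = ⊤) := by
  have key : ∀ R : Matrix (Fin 3) (Fin 3) ℝ, R * Matrix.transpose R = 1 → R.det = 1 →
      ∀ A H : Matrix (Fin 3) (Fin 3) ℝ,
      g ((((1:ℝ)/2) • (1 + R)) * A, (((1:ℝ)/2) • (1 + R)) * H, 0) ≤ g (A, H, 0) := by
    intro R hR hdet A H
    have h := hconv (A, H, 0) (R * A, R * H, 0) le_rfl le_rfl (1/2) (1/2)
      (by norm_num) (by norm_num) (by norm_num)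
    rw [hinv R hR hdet A H 0 le_rfl] at h
    have hcomb : ((1:ℝ)/2) • ((A, H, (0:ℝ)) : Matrix (Fin 3) (Fin 3) ℝ × Matrix (Fin 3) (Fin 3) ℝ × ℝ)
        + ((1:ℝ)/2) • ((R * A, R * H, (0:ℝ)) : Matrix (Fin 3) (Fin 3) ℝ × Matrix (Fin 3) (Fin 3) ℝ × ℝ)
        = ((((1:ℝ)/2) • (1 + R)) * A, (((1:ℝ)/2) • (1 + R)) * H, 0) := by
      simp [Prod.ext_iff, Matrix.smul_mul, add_mul, smul_add]
    rw [hcomb] at h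
    calc g ((((1:ℝ)/2) • (1 + R)) * A, (((1:ℝ)/2) • (1 + R)) * H, 0)
        ≤ ENNReal.ofReal (1/2) * g (A, H, 0) + ENNReal.ofReal (1/2) * g (A, H, 0) := h
      _ = (ENNReal.ofReal (1/2) + ENNReal.ofReal (1/2)) * g (A, H, 0) := by ring
      _ = g (A, H, 0) := by
          rw [← ENNReal.ofReal_add (by norm_num) (by norm_num)]
          norm_num
  set R1 : Matrix (Fin 3) (Fin 3) ℝ := Matrix.diagonal ![1, -1, -1] with hR1def
  set R2 : Matrix (Fin 3) (Fin 3) ℝ := Matrix.diagonal ![-1, 1, -1] with hR2def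
  have hR1 : R1 * Matrix.transpose R1 = 1 := by
    ext i j
    fin_cases i <;> fin_cases j <;>
      simp [hR1def, Matrix.mul_apply, Fin.sum_univ_three, Matrix.one_apply, Matrix.diagonal]
  have hR2 : R2 * Matrix.transpose R2 = 1 := by
    ext i j
    fin_cases i <;> fin_cases j <;>
      simp [hR2def, Matrix.mul_apply, Fin.sum_univ_three, Matrix.one_apply, Matrix.diagonal]
  have hd1 : R1.det = 1 := by
    simp [hR1def, Matrix.det_diagonal, Fin.prod_univ_three]
  have hd2 : R2.det = 1 := by
    simp [hR2def, Matrix.det_diagonal, Fin.prod_univ_three]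
  have hD21 : (((1:ℝ)/2) • (1 + R2)) * (((1:ℝ)/2) • (1 + R1)) = 0 := by
    ext i j
    fin_cases i <;> fin_cases j <;>
      simp [hR1def, hR2def, Matrix.mul_apply, Fin.sum_univ_three, Matrix.one_apply,
        Matrix.diagonal]
  have main : ∀ A H : Matrix (Fin 3) (Fin 3) ℝ, g (0, 0, 0) ≤ g (A, H, 0) := by
    intro A H
    have h1 := key R1 hR1 hd1 A H
    have h2 := key R2 hR2 hd2 ((((1:ℝ)/2) • (1 + R1)) * A) ((((1:ℝ)/2) • (1 + R1)) * H)
    rw [← mul_assoc, ← mul_assoc, hD21, zero_mul, zero_mul] at h2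
    exact h2.trans h1
  exact ⟨main, fun htop A H => top_le_iff.mp (htop ▸ main A H)⟩
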